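/- Let ℓ_d and ℓ_r be real symmetric positive semidefinite q×q matrices with ℓ_d𝟙 = 0 and ℓ_r𝟙 = 0, where 𝟙 is the all-ones vector. If the complex matrix ℓ_d + iℓ_r has exactly one eigenvalue (counted with multiplicity) on the imaginary axis, then for all positive scalars α, β the matrix αℓ_d + iβℓ_r also has exactly one eigenvalue on the imaginary axis. -/

import Mathlib

open Matrix

open scoped Classical in
/-- The number of eigenvalues (with algebraic multiplicity) of a complex matrix that lie
on the imaginary axis, i.e. the number of roots of the characteristic polynomial with
zero real part. -/
noncomputable def imagAxisEigCount {q : ℕ} (A : Matrix (Fin q) (Fin q) ℂ) : ℕ :=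
  (A.charpoly.roots.filter (fun z => z.re = 0)).card

open Matrix Polynomial
open scoped ComplexOrder

theorem Matrix.posSemidef_iff_eq_transpose_mul_self {n : Type*} [Fintype n] {𝕜 : Type*}
    [RCLike 𝕜] {A : Matrix n n 𝕜} : A.PosSemidef ↔ ∃ B : Matrix n n 𝕜, A = Bᴴ * B := by
  classical
  open scoped MatrixOrder in
  exact ⟨fun h => by
    obtain ⟨B, rfl⟩ := CStarAlgebra.nonneg_iff_eq_star_mul_self.mp h.nonneg
    exact ⟨B, rfl⟩, by rintro ⟨B, rfl⟩; exact posSemidef_conjTranspose_mul_self B⟩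

namespace SLaux

variable {q : ℕ}

lemma psd_map {ld : Matrix (Fin q) (Fin q) ℝ} (hld : ld.PosSemidef) :
    (ld.map Complex.ofReal).PosSemidef := by
  obtain ⟨B, hB⟩ := Matrix.posSemidef_iff_eq_transpose_mul_self.mp hld
  refine Matrix.posSemidef_iff_eq_transpose_mul_self.mpr ⟨B.map Complex.ofReal, ?_⟩
  subst hB
  ext i j
  simp [Matrix.mul_apply, Matrix.conjTranspose_apply, Complex.conj_ofReal]

lemma psd_form {A : Matrix (Fin q) (Fin q) ℂ} (hA : A.PosSemidef) (x : Fin q → ℂ) :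
    ∃ r : ℝ, 0 ≤ r ∧ star x ⬝ᵥ (A *ᵥ x) = (r : ℂ) := by
  obtain ⟨B, rfl⟩ := Matrix.posSemidef_iff_eq_transpose_mul_self.mp hA
  have h1 : star x ⬝ᵥ ((Bᴴ * B) *ᵥ x) = star (B *ᵥ x) ⬝ᵥ (B *ᵥ x) := by
    rw [← Matrix.mulVec_mulVec, Matrix.dotProduct_mulVec, Matrix.star_mulVec]
  refine ⟨∑ i, Complex.normSq ((B *ᵥ x) i), Finset.sum_nonneg fun i _ => Complex.normSq_nonneg _, ?_⟩
  rw [h1]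
  simp [dotProduct, Complex.normSq_eq_conj_mul_self]

/-- the complexified matrix `a ℓd + i b ℓr - i μ`. -/
noncomputable def Nm (ld lr : Matrix (Fin q) (Fin q) ℝ) (a b μ : ℝ) :
    Matrix (Fin q) (Fin q) ℂ :=
  (a : ℂ) • ld.map Complex.ofReal + (Complex.I * b) • lr.map Complex.ofReal
    - (Complex.I * μ) • 1

lemma Nm_mulVec (ld lr : Matrix (Fin q) (Fin q) ℝ) (a b μ : ℝ) (x : Fin q → ℂ) :
    Nm ld lr a b μ *ᵥ x =
      (a : ℂ) • (ld.map Complex.ofReal *ᵥ x) + (Complex.I * b) • (lr.map Complex.ofReal *ᵥ x)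
        - (Complex.I * μ) • x := by
  simp [Nm, Matrix.sub_mulVec, Matrix.add_mulVec, Matrix.smul_mulVec]

lemma key_mpr {ld lr : Matrix (Fin q) (Fin q) ℝ} {a b μ : ℝ} (hb : b ≠ 0) {x : Fin q → ℂ}
    (h1 : ld.map Complex.ofReal *ᵥ x = 0)
    (h2 : lr.map Complex.ofReal *ᵥ x = ((μ / b : ℝ) : ℂ) • x) :
    Nm ld lr a b μ *ᵥ x = 0 := by
  rw [Nm_mulVec, h1, h2, smul_zero, zero_add, smul_smul, ← sub_smul]
  convert zero_smul ℂ x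
  push_cast
  field_simp
  ring

lemma key {ld lr : Matrix (Fin q) (Fin q) ℝ} (hld : ld.PosSemidef) (hlr : lr.PosSemidef)
    {a b μ : ℝ} (ha : 0 < a) (hb : 0 < b) (x : Fin q → ℂ) :
    Nm ld lr a b μ *ᵥ x = 0 ↔
      (ld.map Complex.ofReal *ᵥ x = 0 ∧
        lr.map Complex.ofReal *ᵥ x = ((μ / b : ℝ) : ℂ) • x) := by
  constructor
  · intro h
    obtain ⟨s, hs0, hs⟩ := psd_form (psd_map hld) x
    obtain ⟨t, ht0, ht⟩ := psd_form (psd_map hlr) x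
    obtain ⟨n, hn0, hn⟩ := psd_form (Matrix.PosSemidef.one (n := Fin q) (R := ℂ)) x
    rw [Matrix.one_mulVec] at hn
    have hdot : star x ⬝ᵥ (Nm ld lr a b μ *ᵥ x) = 0 := by rw [h, dotProduct_zero]
    rw [Nm_mulVec] at hdot
    have heq : (a : ℂ) * s + (Complex.I * b) * t - (Complex.I * μ) * n = 0 := by
      rw [← hs, ← ht, ← hn]
      simpa [dotProduct_sub, dotProduct_add, dotProduct_smul,
        smul_eq_mul] using hdot
    have hre : a * s = 0 := by
      have := congrArg Complex.re heq
      simpa [Complex.mul_re, Complex.mul_im] using this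
    have hszero : s = 0 := by
      rcases mul_eq_zero.mp hre with h' | h'
      · exact absurd h' ha.ne'
      · exact h'
    have hld0 : ld.map Complex.ofReal *ᵥ x = 0 := by
      refine ((psd_map hld).dotProduct_mulVec_zero_iff x).mp ?_
      rw [hs, hszero, Complex.ofReal_zero]
    refine ⟨hld0, ?_⟩
    have h2 : (Complex.I * b) • (lr.map Complex.ofReal *ᵥ x) = (Complex.I * μ) • x := by
      have := Nm_mulVec ld lr a b μ x
      rw [h, hld0, smul_zero, zero_add] at this
      linear_combination (norm := module) -this
    have hIb : (Complex.I * b) ≠ 0 := by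
      simp [Complex.I_ne_zero, Complex.ofReal_ne_zero, hb.ne']
    have := congrArg (fun v => (Complex.I * (b : ℂ))⁻¹ • v) h2
    simp only [smul_smul, inv_mul_cancel₀ hIb, one_smul] at this
    rw [this]
    congr 1
    rw [Complex.ofReal_div]
    field_simp
  · rintro ⟨h1, h2⟩
    exact key_mpr hb.ne' h1 h2
variable {q : ℕ}

lemma herm_map {ld : Matrix (Fin q) (Fin q) ℝ} (hsymm : ldᵀ = ld) :
    (ld.map Complex.ofReal)ᴴ = ld.map Complex.ofReal := by
  ext i j
  have : ld j i = ld i j := by conv_lhs => rw [← hsymm, Matrix.transpose_apply]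
  simp [Matrix.conjTranspose_apply, Complex.conj_ofReal, this]

lemma Nm_conjTranspose {ld lr : Matrix (Fin q) (Fin q) ℝ}
    (hld_symm : ldᵀ = ld) (hlr_symm : lrᵀ = lr) (a b μ : ℝ) :
    (Nm ld lr a b μ)ᴴ = Nm ld lr a (-b) (-μ) := by
  simp only [Nm, conjTranspose_sub, conjTranspose_add, conjTranspose_smul, conjTranspose_one,
    herm_map hld_symm, herm_map hlr_symm]
  have h1 : star ((a : ℂ)) = (a : ℂ) := by simp [Complex.star_def, Complex.conj_ofReal]
  have h2 : star (Complex.I * (b : ℂ)) = Complex.I * ((-b : ℝ) : ℂ) := by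
    simp [Complex.star_def, _root_.map_mul, Complex.conj_I, Complex.conj_ofReal]
  have h3 : star (Complex.I * (μ : ℂ)) = Complex.I * ((-μ : ℝ) : ℂ) := by
    simp [Complex.star_def, _root_.map_mul, Complex.conj_I, Complex.conj_ofReal]
  rw [h1, h2, h3]

lemma adjoint_kill {ld lr : Matrix (Fin q) (Fin q) ℝ} (hld : ld.PosSemidef) (hlr : lr.PosSemidef)
    (hld_symm : ldᵀ = ld) (hlr_symm : lrᵀ = lr)
    {a b μ : ℝ} (ha : 0 < a) (hb : 0 < b) {x : Fin q → ℂ}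
    (h : Nm ld lr a b μ *ᵥ x = 0) :
    (Nm ld lr a b μ)ᴴ *ᵥ x = 0 := by
  obtain ⟨h1, h2⟩ := (key hld hlr ha hb x).mp h
  rw [Nm_conjTranspose hld_symm hlr_symm]
  refine key_mpr (by simpa using hb.ne') h1 ?_
  rw [h2]
  norm_num

lemma semisimple {ld lr : Matrix (Fin q) (Fin q) ℝ} (hld : ld.PosSemidef) (hlr : lr.PosSemidef)
    (hld_symm : ldᵀ = ld) (hlr_symm : lrᵀ = lr)
    {a b μ : ℝ} (ha : 0 < a) (hb : 0 < b) {y : Fin q → ℂ}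
    (h : Nm ld lr a b μ *ᵥ (Nm ld lr a b μ *ᵥ y) = 0) :
    Nm ld lr a b μ *ᵥ y = 0 := by
  set N := Nm ld lr a b μ with hN
  set x := N *ᵥ y with hx
  have hadj : Nᴴ *ᵥ x = 0 := adjoint_kill hld hlr hld_symm hlr_symm ha hb h
  have hz : star x ⬝ᵥ x = 0 := by
    have hs : star x ᵥ* N = 0 := by
      have h' := congrArg star hadj
      rwa [Matrix.star_mulVec, conjTranspose_conjTranspose, star_zero] at h'
    calc star x ⬝ᵥ x = star x ⬝ᵥ (N *ᵥ y) := by rw [← hx]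
      _ = (star x ᵥ* N) ⬝ᵥ y := Matrix.dotProduct_mulVec _ _ _
      _ = 0 := by rw [hs, zero_dotProduct]
  simpa [hx] using (dotProduct_star_self_eq_zero).mp hz

lemma pow_kill {ld lr : Matrix (Fin q) (Fin q) ℝ} (hld : ld.PosSemidef) (hlr : lr.PosSemidef)
    (hld_symm : ldᵀ = ld) (hlr_symm : lrᵀ = lr)
    {a b μ : ℝ} (ha : 0 < a) (hb : 0 < b) :
    ∀ (k : ℕ) (x : Fin q → ℂ), (Nm ld lr a b μ) ^ k *ᵥ x = 0 → Nm ld lr a b μ *ᵥ x = 0 := by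
  intro k
  induction k with
  | zero => intro x hx; simp only [pow_zero, Matrix.one_mulVec] at hx; simp [hx]
  | succ k ih =>
      intro x hx
      rw [pow_succ, ← Matrix.mulVec_mulVec] at hx
      have h2 := ih _ hx
      exact semisimple hld hlr hld_symm hlr_symm ha hb h2

lemma charpoly_sub_smul_one (M : Matrix (Fin q) (Fin q) ℂ) (lam : ℂ) :
    (M - lam • 1).charpoly = M.charpoly.comp (X + C lam) := by
  rw [Polynomial.comp_eq_aeval]
  rw [Matrix.charpoly, Matrix.charpoly, AlgHom.map_det (Polynomial.aeval (X + C lam))]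
  congr 1
  ext i j
  rw [AlgHom.mapMatrix_apply]
  by_cases h : i = j
  · subst h
    simp [Matrix.charmatrix_apply_eq, Matrix.sub_apply, Matrix.smul_apply, Matrix.one_apply,
      map_sub, Polynomial.aeval_X, Polynomial.aeval_C, Polynomial.algebraMap_eq]
    ring
  · simp [Matrix.charmatrix_apply_ne _ _ _ h, Matrix.sub_apply, Matrix.smul_apply,
      Matrix.one_apply_ne h, Polynomial.aeval_C, Polynomial.algebraMap_eq]

lemma matrix_charpoly_toLin' (M : Matrix (Fin q) (Fin q) ℂ) :
    (Matrix.toLin' M).charpoly = M.charpoly := by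
  rw [← LinearMap.charpoly_toMatrix (Matrix.toLin' M) (Pi.basisFun ℂ (Fin q)),
    LinearMap.toMatrix_eq_toMatrix', LinearMap.toMatrix'_toLin']

lemma count_eq_finrank (M : Matrix (Fin q) (Fin q) ℂ) (lam : ℂ) [DecidableEq ℂ] :
    M.charpoly.roots.count lam =
      Module.finrank ℂ (Module.End.maxGenEigenspace (Matrix.toLin' (M - lam • 1)) 0) := by
  rw [Polynomial.count_roots, Polynomial.rootMultiplicity_eq_natTrailingDegree,
    ← charpoly_sub_smul_one, LinearMap.finrank_maxGenEigenspace_zero_eq, matrix_charpoly_toLin']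

lemma toLin'_pow (M : Matrix (Fin q) (Fin q) ℂ) (k : ℕ) :
    (Matrix.toLin' M) ^ k = Matrix.toLin' (M ^ k) := by
  induction k with
  | zero => simp [Matrix.toLin'_one, Module.End.one_eq_id]
  | succ k ih => rw [pow_succ, pow_succ, ih, Matrix.toLin'_mul, Module.End.mul_eq_comp]

/-- the common eigenspace: kernel of `ℓd` intersected with the `μ`-eigenspace of `ℓr`. -/
noncomputable def espace (ld lr : Matrix (Fin q) (Fin q) ℝ) (μ : ℝ) :
    Submodule ℂ (Fin q → ℂ) :=
  LinearMap.ker (Matrix.toLin' (ld.map Complex.ofReal)) ⊓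
    LinearMap.ker (Matrix.toLin' (lr.map Complex.ofReal) - (μ : ℂ) • LinearMap.id)

lemma mem_espace {ld lr : Matrix (Fin q) (Fin q) ℝ} {μ : ℝ} {x : Fin q → ℂ} :
    x ∈ espace ld lr μ ↔
      (ld.map Complex.ofReal *ᵥ x = 0 ∧ lr.map Complex.ofReal *ᵥ x = ((μ : ℝ) : ℂ) • x) := by
  simp only [espace, Submodule.mem_inf, LinearMap.mem_ker, LinearMap.sub_apply,
    LinearMap.smul_apply, LinearMap.id_apply, Matrix.toLin'_apply, sub_eq_zero]

lemma maxGen_eq_espace {ld lr : Matrix (Fin q) (Fin q) ℝ} (hld : ld.PosSemidef)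
    (hlr : lr.PosSemidef) (hld_symm : ldᵀ = ld) (hlr_symm : lrᵀ = lr)
    {a b μ : ℝ} (ha : 0 < a) (hb : 0 < b) :
    Module.End.maxGenEigenspace (Matrix.toLin' (Nm ld lr a b μ)) 0 = espace ld lr (μ / b) := by
  ext x
  rw [Module.End.mem_maxGenEigenspace, mem_espace]
  constructor
  · rintro ⟨k, hk⟩
    simp only [zero_smul, sub_zero, toLin'_pow, Matrix.toLin'_apply] at hk
    exact (key hld hlr ha hb x).mp (pow_kill hld hlr hld_symm hlr_symm ha hb k x hk)
  · rintro ⟨h1, h2⟩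
    refine ⟨1, ?_⟩
    simp only [zero_smul, sub_zero, pow_one, Matrix.toLin'_apply]
    exact key_mpr hb.ne' h1 h2

lemma count_imag {ld lr : Matrix (Fin q) (Fin q) ℝ} (hld : ld.PosSemidef)
    (hlr : lr.PosSemidef) (hld_symm : ldᵀ = ld) (hlr_symm : lrᵀ = lr)
    {a b : ℝ} (ha : 0 < a) (hb : 0 < b) {lam : ℂ} (hlam : lam.re = 0) [DecidableEq ℂ] :
    ((a • ld).map Complex.ofReal + Complex.I • (b • lr).map Complex.ofReal).charpoly.roots.count
        lam = Module.finrank ℂ (espace ld lr (lam.im / b)) := by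
  have h1 : (a • ld).map Complex.ofReal = (a : ℂ) • ld.map Complex.ofReal := by
    ext i j
    simp [Matrix.smul_apply, Complex.ofReal_mul, smul_eq_mul]
  have h2 : Complex.I • (b • lr).map Complex.ofReal
      = (Complex.I * b) • lr.map Complex.ofReal := by
    ext i j
    simp [Matrix.smul_apply, Complex.ofReal_mul, smul_eq_mul]
    ring
  have h3 : Complex.I * (lam.im : ℂ) = lam := by
    apply Complex.ext <;> simp [hlam]
  have hMab : (a • ld).map Complex.ofReal + Complex.I • (b • lr).map Complex.ofReal - lam • 1
      = Nm ld lr a b lam.im := by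
    rw [h1, h2, Nm, h3]
  rw [count_eq_finrank, hMab, maxGen_eq_espace hld hlr hld_symm hlr_symm ha hb]

open scoped Classical in
lemma filter_card {ld lr : Matrix (Fin q) (Fin q) ℝ} (hld : ld.PosSemidef)
    (hlr : lr.PosSemidef) (hld_symm : ldᵀ = ld) (hlr_symm : lrᵀ = lr)
    {a b : ℝ} (ha : 0 < a) (hb : 0 < b) :
    (((a • ld).map Complex.ofReal
        + Complex.I • (b • lr).map Complex.ofReal).charpoly.roots.filter
        (fun z => z.re = 0)).card =
      ((((1 : ℝ) • ld).map Complex.ofReal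
        + Complex.I • ((1 : ℝ) • lr).map Complex.ofReal).charpoly.roots.filter
        (fun z => z.re = 0)).card := by
  have hbne : (b : ℂ) ≠ 0 := by
    simp [Complex.ofReal_ne_zero, hb.ne']
  have hinj : Function.Injective (fun z : ℂ => (b : ℂ) * z) := mul_right_injective₀ hbne
  have hset : ((a • ld).map Complex.ofReal
        + Complex.I • (b • lr).map Complex.ofReal).charpoly.roots.filter (fun z => z.re = 0)
      = Multiset.map (fun z => (b : ℂ) * z)
        ((((1 : ℝ) • ld).map Complex.ofReal
          + Complex.I • ((1 : ℝ) • lr).map Complex.ofReal).charpoly.roots.filter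
          (fun z => z.re = 0)) := by
    ext z
    by_cases hz : z.re = 0
    · have hzeq : z = (b : ℂ) * ((b : ℂ)⁻¹ * z) := by field_simp
      rw [Multiset.count_filter_of_pos (p := fun z : ℂ => z.re = 0) hz,
        count_imag hld hlr hld_symm hlr_symm ha hb hz]
      conv_rhs => rw [hzeq]
      rw [Multiset.count_map_eq_count' _ _ hinj]
      have hbinv : ((b : ℂ))⁻¹ = ((b⁻¹ : ℝ) : ℂ) := by push_cast; ring
      have hwre : ((b : ℂ)⁻¹ * z).re = 0 := by
        rw [hbinv]
        simp [Complex.mul_re, hz]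
      rw [Multiset.count_filter_of_pos (p := fun z : ℂ => z.re = 0) hwre,
        count_imag hld hlr hld_symm hlr_symm one_pos one_pos hwre]
      have him : ((b : ℂ)⁻¹ * z).im / 1 = z.im / b := by
        rw [hbinv]
        simp [Complex.mul_im]
        field_simp
      rw [him]
    · rw [Multiset.count_filter_of_neg (p := fun z : ℂ => z.re = 0) hz, eq_comm, Multiset.count_eq_zero]
      intro hmem
      obtain ⟨w, hw, hwz⟩ := Multiset.mem_map.mp hmem
      have hwre := (Multiset.mem_filter.mp hw).2
      apply hz
      rw [← hwz]
      simp [Complex.mul_re, hwre]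
  rw [hset, Multiset.card_map]

end SLaux

open SLaux in
/-- If `ℓ_d + i ℓ_r` (with `ℓ_d, ℓ_r` scalar Laplacians) has exactly one eigenvalue on the
imaginary axis, then so does `α ℓ_d + i β ℓ_r` for all positive scalars `α, β`. -/
theorem scaled_laplacian_pair_single_imaginary_eigenvalue
    (q : ℕ) (ld lr : Matrix (Fin q) (Fin q) ℝ)
    (hld_symm : ldᵀ = ld) (hlr_symm : lrᵀ = lr)
    (hld : ld.PosSemidef) (hlr : lr.PosSemidef)
    (hld1 : ld *ᵥ (fun _ => (1 : ℝ)) = 0) (hlr1 : lr *ᵥ (fun _ => (1 : ℝ)) = 0)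
    (hcount : imagAxisEigCount (ld.map Complex.ofReal + Complex.I • lr.map Complex.ofReal) = 1) :
    ∀ α β : ℝ, 0 < α → 0 < β →
      imagAxisEigCount
        ((α • ld).map Complex.ofReal + Complex.I • (β • lr).map Complex.ofReal) = 1 := by
  intro α β hα hβ
  have h := SLaux.filter_card hld hlr hld_symm hlr_symm hα hβ
  simp only [imagAxisEigCount] at hcount ⊢
  rw [h, one_smul, one_smul]
  exact hcount
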